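/- Let A be an n×n symmetric real matrix, J a p×p symmetric real matrix, and ρ > 0. Define the map F from n×p real matrices to n×n real matrices by F(X) := ρ⁻¹·A X Xᵀ A + (A − A X J Xᵀ A)·(A − A X J Xᵀ A). Then F is Fréchet differentiable at every X, and its derivative in a direction ζ (an n×p matrix) is DF(X)[ζ] = (2/ρ)·A·sym(Xζᵀ)·A − 4·sym(A·sym(XJζᵀ)·A·S_X), where S_X := A − A X J Xᵀ A. -/

import Mathlib

open Matrix

attribute [local instance] Matrix.normedAddCommGroup Matrix.normedSpace

/-- The symmetric part of a square matrix. -/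
noncomputable def msym {m : Type*} (S : Matrix m m ℝ) : Matrix m m ℝ :=
  (1 / 2 : ℝ) • (S + Sᵀ)

section aux

variable {a b c : Type*} [Fintype a] [Fintype b] [Fintype c]

/-- Matrix multiplication as a continuous bilinear map. -/
noncomputable def mulCLM :
    Matrix a b ℝ →L[ℝ] Matrix b c ℝ →L[ℝ] Matrix a c ℝ :=
  LinearMap.toContinuousLinearMap
    { toFun := fun X => LinearMap.toContinuousLinearMap
        { toFun := fun Y => X * Y
          map_add' := fun Y Z => Matrix.mul_add X Y Z
          map_smul' := fun r Y => Matrix.mul_smul X r Y }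
      map_add' := fun X X' => by
        apply ContinuousLinearMap.ext; intro Y
        simp [Matrix.add_mul]
      map_smul' := fun r X => by
        apply ContinuousLinearMap.ext; intro Y
        simp [Matrix.smul_mul] }

@[simp] lemma mulCLM_apply (X : Matrix a b ℝ) (Y : Matrix b c ℝ) :
    mulCLM X Y = X * Y := rfl

/-- Transpose as a continuous linear map. -/
noncomputable def tCLM : Matrix a b ℝ →L[ℝ] Matrix b a ℝ :=
  LinearMap.toContinuousLinearMap (Matrix.transposeLinearEquiv a b ℝ ℝ).toLinearMap

@[simp] lemma tCLM_apply (X : Matrix a b ℝ) : tCLM X = Xᵀ := rfl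

variable {E : Type*} [NormedAddCommGroup E] [NormedSpace ℝ E]

theorem HasFDerivAt.matmul {f : E → Matrix a b ℝ} {g : E → Matrix b c ℝ}
    {f' : E →L[ℝ] Matrix a b ℝ} {g' : E →L[ℝ] Matrix b c ℝ} {x : E}
    (hf : HasFDerivAt f f' x) (hg : HasFDerivAt g g' x) :
    HasFDerivAt (fun y => f y * g y)
      (@HAdd.hAdd (E →L[ℝ] Matrix a c ℝ) (E →L[ℝ] Matrix a c ℝ) (E →L[ℝ] Matrix a c ℝ) _
        ((mulCLM.flip (g x)).comp f') (((mulCLM (f x)) : Matrix b c ℝ →L[ℝ] Matrix a c ℝ).comp g')) x := by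
  have hb : IsBoundedBilinearMap ℝ (fun q : Matrix a b ℝ × Matrix b c ℝ => q.1 * q.2) :=
    (mulCLM (a := a) (b := b) (c := c)).isBoundedBilinearMap
  have h := (hb.hasFDerivAt (f x, g x)).comp x (HasFDerivAt.prodMk hf hg)
  have heq : (hb.deriv (f x, g x)).comp (f'.prod g') =
      @HAdd.hAdd (E →L[ℝ] Matrix a c ℝ) (E →L[ℝ] Matrix a c ℝ) (E →L[ℝ] Matrix a c ℝ) _
        ((mulCLM.flip (g x)).comp f') (((mulCLM (f x)) : Matrix b c ℝ →L[ℝ] Matrix a c ℝ).comp g') := by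
    apply ContinuousLinearMap.ext; intro ζ
    show f x * g' ζ + f' ζ * g x = f' ζ * g x + f x * g' ζ
    exact add_comm _ _
  exact h.congr_fderiv heq

end aux

set_option maxHeartbeats 1600000 in
/-- The metric matrix map `X ↦ G¹_X` is Fréchet differentiable with derivative
`DG¹(X)[ζ] = (2/ρ)·A·sym(Xζᵀ)·A − 4·sym(A·sym(XJζᵀ)·A·S_X)`. -/
theorem G1_hasFDerivAt
    (n p : ℕ) (hpn : p ≤ n)
    (A : Matrix (Fin n) (Fin n) ℝ) (hA : Aᵀ = A)
    (J : Matrix (Fin p) (Fin p) ℝ) (hJ : Jᵀ = J)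
    (ρ : ℝ) (hρ : 0 < ρ)
    (F : Matrix (Fin n) (Fin p) ℝ → Matrix (Fin n) (Fin n) ℝ)
    (hF : ∀ X, F X = ρ⁻¹ • (A * X * Xᵀ * A)
      + (A - A * X * J * Xᵀ * A) * (A - A * X * J * Xᵀ * A)) :
    ∀ X : Matrix (Fin n) (Fin p) ℝ,
      ∃ F' : Matrix (Fin n) (Fin p) ℝ →L[ℝ] Matrix (Fin n) (Fin n) ℝ,
        HasFDerivAt F F' X ∧
          ∀ ζ : Matrix (Fin n) (Fin p) ℝ,
            F' ζ = (2 / ρ) • (A * msym (X * ζᵀ) * A)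
              - (4 : ℝ) • msym (A * msym (X * J * ζᵀ) * A * (A - A * X * J * Xᵀ * A)) := by
  intro X
  -- derivative of Y ↦ Y
  have hid : HasFDerivAt (fun Y : Matrix (Fin n) (Fin p) ℝ => Y)
      (ContinuousLinearMap.id ℝ _) X := hasFDerivAt_id X
  have ht : HasFDerivAt (fun Y : Matrix (Fin n) (Fin p) ℝ => Yᵀ) tCLM X := by
    exact (tCLM (a := Fin n) (b := Fin p)).hasFDerivAt
  -- constant maps
  have hcA : HasFDerivAt (fun _ : Matrix (Fin n) (Fin p) ℝ => A) (0 : _ →L[ℝ] _) X :=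
    hasFDerivAt_const A X
  have hcJ : HasFDerivAt (fun _ : Matrix (Fin n) (Fin p) ℝ => J) (0 : _ →L[ℝ] _) X :=
    hasFDerivAt_const J X
  -- Y ↦ A * Y * Yᵀ * A
  have h1 := HasFDerivAt.matmul (HasFDerivAt.matmul (HasFDerivAt.matmul hcA hid) ht) hcA
  -- S : Y ↦ A - A * Y * J * Yᵀ * A
  have hS := HasFDerivAt.sub hcA (HasFDerivAt.matmul (HasFDerivAt.matmul (HasFDerivAt.matmul
    (HasFDerivAt.matmul hcA hid) hcJ) ht) hcA)
  set S : Matrix (Fin n) (Fin n) ℝ := A - A * X * J * Xᵀ * A with hSdef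
  have h2 := HasFDerivAt.matmul hS hS
  have hsum := (HasFDerivAt.add (HasFDerivAt.const_smul h1 ρ⁻¹) h2)
  have hFeq : F = fun Y => ρ⁻¹ • (A * Y * Yᵀ * A)
      + (A - A * Y * J * Yᵀ * A) * (A - A * Y * J * Yᵀ * A) := funext hF
  rw [hFeq]
  refine ⟨_, hsum, ?_⟩
  intro ζ
  have hSt : Sᵀ = S := by
    simp [hSdef, transpose_mul, hA, hJ, Matrix.mul_assoc]
  change ρ⁻¹ • ((((0 : Matrix (Fin n) (Fin n) ℝ) * X + A * ζ) * Xᵀ + (A * X) * ζᵀ) * A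
      + (A * X * Xᵀ) * (0 : Matrix (Fin n) (Fin n) ℝ))
    + ((0 - (((((0 : Matrix (Fin n) (Fin n) ℝ) * X + A * ζ) * J + (A * X) * (0 : Matrix (Fin p) (Fin p) ℝ)) * Xᵀ
          + (A * X * J) * ζᵀ) * A + (A * X * J * Xᵀ) * (0 : Matrix (Fin n) (Fin n) ℝ))) * S
      + S * (0 - (((((0 : Matrix (Fin n) (Fin n) ℝ) * X + A * ζ) * J + (A * X) * (0 : Matrix (Fin p) (Fin p) ℝ)) * Xᵀ
          + (A * X * J) * ζᵀ) * A + (A * X * J * Xᵀ) * (0 : Matrix (Fin n) (Fin n) ℝ)))) = _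
  simp only [msym, Matrix.zero_mul, Matrix.mul_zero, zero_add, add_zero, zero_sub, sub_zero,
    Matrix.neg_mul, Matrix.mul_neg, transpose_mul, transpose_transpose, transpose_smul,
    transpose_add, hA, hJ, hSt, smul_add, Matrix.smul_mul, Matrix.mul_smul,
    Matrix.add_mul, Matrix.mul_add, Matrix.sub_mul, Matrix.mul_sub]
  have h2ρ : (2 / ρ) * (1 / 2 : ℝ) = ρ⁻¹ := by field_simp
  have h4 : (4 : ℝ) * (1 / 2 * (1 / 2 : ℝ)) = 1 := by norm_num
  clear hsum hFeq h1 h2 hS hid ht hcA hcJ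
  simp only [hSdef, Matrix.mul_sub, Matrix.sub_mul, Matrix.mul_add, Matrix.add_mul,
    Matrix.mul_smul, Matrix.smul_mul, smul_smul, Matrix.mul_assoc, h2ρ, h4, one_smul,
    neg_sub, sub_eq_add_neg, neg_add, neg_neg, neg_smul, smul_neg,
    Matrix.mul_neg, Matrix.neg_mul]
  abel
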